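/- arXiv:0808.0163 — 4 statements merged into one kernel-verified Lean document; each statement's English description precedes it below -/
import Mathlib

section
/- Let A be a real symmetric n×n matrix with λ_max(A) < u, let δ_U > 0, and let v ∈ R^n. Define U_A(v) = v^T((u+δ_U)I - A)^{-2} v / (Φ^u(A) - Φ^{u+δ_U}(A)) + v^T((u+δ_U)I - A)^{-1} v. If t > 0 satisfies 1/t ≥ U_A(v), then Φ^{u+δ_U}(A + t v v^T) ≤ Φ^u(A) and λ_max(A + t v v^T) < u + δ_U. -/
open Matrix

section Aux

variable {n : ℕ}

private lemma aux_vecMulVec_mul (a b : Fin n → ℝ) (M : Matrix (Fin n) (Fin n) ℝ) :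
    vecMulVec a b * M = vecMulVec a (b ᵥ* M) := by
  ext i j
  simp only [Matrix.mul_apply, vecMulVec_apply, vecMul, dotProduct, Finset.mul_sum]
  exact Finset.sum_congr rfl fun k _ => by ring

private lemma aux_mul_vecMulVec (M : Matrix (Fin n) (Fin n) ℝ) (a b : Fin n → ℝ) :
    M * vecMulVec a b = vecMulVec (M *ᵥ a) b := by
  ext i j
  simp only [Matrix.mul_apply, vecMulVec_apply, mulVec, dotProduct, Finset.sum_mul]
  exact Finset.sum_congr rfl fun k _ => by ring

private lemma aux_vecMulVec_mul_vecMulVec (a b c d : Fin n → ℝ) :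
    vecMulVec a b * vecMulVec c d = (b ⬝ᵥ c) • vecMulVec a d := by
  ext i j
  simp only [Matrix.mul_apply, vecMulVec_apply, Matrix.smul_apply, dotProduct, smul_eq_mul,
    Finset.sum_mul]
  exact Finset.sum_congr rfl fun k _ => by ring

private lemma aux_trace_vecMulVec (a b : Fin n → ℝ) : (vecMulVec a b).trace = a ⬝ᵥ b := by
  simp [Matrix.trace, Matrix.diag, vecMulVec_apply, dotProduct]

private lemma aux_vecMulVec_mulVec (a b x : Fin n → ℝ) :
    (vecMulVec a b) *ᵥ x = (b ⬝ᵥ x) • a := by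
  ext i
  simp only [mulVec, vecMulVec_apply, dotProduct, Pi.smul_apply, smul_eq_mul, Finset.sum_mul]
  exact Finset.sum_congr rfl fun k _ => by ring

private lemma aux_posSemidef_vecMulVec (w : Fin n → ℝ) : (vecMulVec w w).PosSemidef := by
  refine PosSemidef.of_dotProduct_mulVec_nonneg ?_ ?_
  · ext i j
    simp [conjTranspose_apply, vecMulVec_apply, mul_comm]
  · intro x
    rw [star_trivial, aux_vecMulVec_mulVec, dotProduct_smul, smul_eq_mul, dotProduct_comm]
    exact mul_self_nonneg _

private lemma aux_trace_pos {M : Matrix (Fin n) (Fin n) ℝ} (hM : M.PosDef) (hn : 0 < n) :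
    0 < M.trace := by
  have h : ∀ i, 0 < M i i := by
    intro i
    have h2 := hM.dotProduct_mulVec_pos (x := Pi.single i 1) (by
      intro h0
      simpa using congrFun h0 i)
    rw [star_trivial] at h2
    simpa [single_dotProduct, mulVec_single] using h2
  exact Finset.sum_pos (fun i _ => h i) ⟨⟨0, hn⟩, Finset.mem_univ _⟩

private lemma aux_posSemidef_smul {M : Matrix (Fin n) (Fin n) ℝ} (hM : M.PosSemidef)
    {a : ℝ} (ha : 0 ≤ a) : (a • M).PosSemidef := by
  refine PosSemidef.of_dotProduct_mulVec_nonneg ?_ ?_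
  · have h1 : Mᵀ = M := by
      have := hM.1
      rwa [IsHermitian, conjTranspose_eq_transpose_of_trivial] at this
    ext i j
    simp only [conjTranspose_apply, Matrix.smul_apply, star_trivial, smul_eq_mul]
    show a * Mᵀ i j = a * M i j
    rw [h1]
  · intro x
    rw [smul_mulVec, dotProduct_smul, smul_eq_mul]
    exact mul_nonneg ha (hM.dotProduct_mulVec_nonneg x)

private lemma aux_dot_symm {M : Matrix (Fin n) (Fin n) ℝ} (h : Mᵀ = M) (x y : Fin n → ℝ) :
    x ⬝ᵥ M *ᵥ y = (M *ᵥ x) ⬝ᵥ y := by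
  rw [dotProduct_mulVec]
  congr 1
  nth_rewrite 1 [← h]
  rw [vecMul_transpose]

end Aux

/-- The upper potential `Φ^u(A) = Tr((uI - A)⁻¹)`. -/
noncomputable def upperPotential {n : ℕ} (u : ℝ) (A : Matrix (Fin n) (Fin n) ℝ) : ℝ :=
  ((u • (1 : Matrix (Fin n) (Fin n) ℝ) - A)⁻¹).trace

/-- Upper Barrier Shift (Lemma 3.3): if `λ_max(A) < u` (i.e. `uI - A ≻ 0`) and
`1/t ≥ U_A(v)`, then adding `t·vvᵀ` and shifting the upper barrier by `δU` does not
increase the upper potential, and no eigenvalue crosses the shifted barrier. -/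
theorem upper_barrier_shift {n : ℕ} (A : Matrix (Fin n) (Fin n) ℝ) (hA : A.IsSymm)
    (u δU : ℝ) (hδ : 0 < δU)
    (hu : (u • (1 : Matrix (Fin n) (Fin n) ℝ) - A).PosDef)
    (v : Fin n → ℝ) (t : ℝ) (ht : 0 < t)
    (hUt : 1 / t ≥
      (v ⬝ᵥ (((u + δU) • (1 : Matrix (Fin n) (Fin n) ℝ) - A)⁻¹ *
          ((u + δU) • (1 : Matrix (Fin n) (Fin n) ℝ) - A)⁻¹).mulVec v) /
        (upperPotential u A - upperPotential (u + δU) A)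
      + v ⬝ᵥ (((u + δU) • (1 : Matrix (Fin n) (Fin n) ℝ) - A)⁻¹).mulVec v) :
    upperPotential (u + δU) (A + t • vecMulVec v v) ≤ upperPotential u A ∧
    ((u + δU) • (1 : Matrix (Fin n) (Fin n) ℝ) - (A + t • vecMulVec v v)).PosDef := by
  rcases Nat.eq_zero_or_pos n with hn | hn
  · subst hn
    constructor
    · simp [upperPotential, Matrix.trace]
    · exact ⟨Subsingleton.elim _ _, fun x hx => absurd (Subsingleton.elim x 0) hx⟩
  -- Notation
  set M₁ : Matrix (Fin n) (Fin n) ℝ := u • (1 : Matrix (Fin n) (Fin n) ℝ) - A with hM₁def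
  set M₂ : Matrix (Fin n) (Fin n) ℝ := (u + δU) • (1 : Matrix (Fin n) (Fin n) ℝ) - A with hM₂def
  have hM₂eq : M₂ = M₁ + δU • (1 : Matrix (Fin n) (Fin n) ℝ) := by
    rw [hM₁def, hM₂def, add_smul]; abel
  have hδ1 : (δU • (1 : Matrix (Fin n) (Fin n) ℝ)).PosDef := by
    rw [smul_one_eq_diagonal]
    exact Matrix.PosDef.diagonal fun _ => hδ
  have hM₂ : M₂.PosDef := hM₂eq ▸ hu.add hδ1
  set P : Matrix (Fin n) (Fin n) ℝ := M₂⁻¹ with hPdef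
  have hP : P.PosDef := hM₂.inv
  have hPsymm : Pᵀ = P := by
    have := hP.isHermitian
    rwa [IsHermitian, conjTranspose_eq_transpose_of_trivial] at this
  have hM₂P : M₂ * P = 1 := Matrix.mul_nonsing_inv _ hM₂.det_pos.ne'.isUnit
  have hPM₂ : P * M₂ = 1 := Matrix.nonsing_inv_mul _ hM₂.det_pos.ne'.isUnit
  have hM₁inv : M₁ * M₁⁻¹ = 1 := Matrix.mul_nonsing_inv _ hu.det_pos.ne'.isUnit
  have hM₁inv' : M₁⁻¹ * M₁ = 1 := Matrix.nonsing_inv_mul _ hu.det_pos.ne'.isUnit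
  set s : ℝ := v ⬝ᵥ P *ᵥ v with hsdef
  set q : ℝ := v ⬝ᵥ (P * P) *ᵥ v with hqdef
  set D : ℝ := upperPotential u A - upperPotential (u + δU) A with hDdef
  have hPot2 : upperPotential (u + δU) A = P.trace := rfl
  have hPot1 : upperPotential u A = M₁⁻¹.trace := rfl
  -- D > 0
  have hM₂M₁ : (M₂ * M₁).PosDef := by
    have hM₁sq : (M₁ * M₁).PosDef := by
      refine PosDef.of_dotProduct_mulVec_pos ?_ ?_
      · have h1 := hu.isHermitian
        rw [IsHermitian] at h1 ⊢
        rw [conjTranspose_mul, h1]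
      · intro x hx
        have hxM : M₁ *ᵥ x ≠ 0 := by
          intro h0
          apply hx
          have := Matrix.mulVec_injective_iff_isUnit.mpr hu.isUnit
          exact this (by rw [h0, mulVec_zero])
        have h1 : M₁ᵀ = M₁ := by
          have := hu.isHermitian
          rwa [IsHermitian, conjTranspose_eq_transpose_of_trivial] at this
        have heq : star x ⬝ᵥ (M₁ * M₁) *ᵥ x = star (M₁ *ᵥ x) ⬝ᵥ (M₁ *ᵥ x) := by
          rw [star_trivial, star_trivial, ← mulVec_mulVec, aux_dot_symm h1]
        rw [heq]
        exact dotProduct_star_self_pos_iff.mpr hxM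
    have : M₂ * M₁ = M₁ * M₁ + δU • M₁ := by
      rw [hM₂eq, add_mul, Matrix.smul_mul, one_mul]
    rw [this]
    exact hM₁sq.add_posSemidef (aux_posSemidef_smul hu.posSemidef hδ.le)
  have hDeq : D = δU * (M₁⁻¹ * P).trace := by
    have h1 : M₁⁻¹ - P = δU • (M₁⁻¹ * P) := by
      have : M₁⁻¹ - P = M₁⁻¹ * (M₂ - M₁) * P := by
        rw [Matrix.mul_sub, Matrix.sub_mul, mul_assoc, hM₂P, mul_one, hM₁inv', one_mul]
      rw [this, hM₂eq]
      have : M₁ + δU • (1 : Matrix (Fin n) (Fin n) ℝ) - M₁ = δU • 1 := by abel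
      rw [this, Matrix.mul_smul, mul_one, Matrix.smul_mul]
    rw [hDdef, hPot1, hPot2, ← trace_sub, h1, trace_smul, smul_eq_mul]
  have hM₁P : (M₁⁻¹ * P).PosDef := by
    have : M₁⁻¹ * P = (M₂ * M₁)⁻¹ := by rw [Matrix.mul_inv_rev, hPdef]
    rw [this]
    exact hM₂M₁.inv
  have hD : 0 < D := by
    rw [hDeq]
    exact mul_pos hδ (aux_trace_pos hM₁P hn)
  -- case v = 0
  by_cases hv : v = 0
  · subst hv
    have hvv : vecMulVec (0 : Fin n → ℝ) (0 : Fin n → ℝ) = 0 := by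
      ext i j; simp [vecMulVec_apply]
    constructor
    · rw [hvv, smul_zero, add_zero]
      have : upperPotential u A - upperPotential (u + δU) A > 0 := hD
      linarith
    · rw [hvv, smul_zero, add_zero]
      exact hM₂
  -- main case
  set V : Matrix (Fin n) (Fin n) ℝ := vecMulVec v v with hVdef
  set W : Matrix (Fin n) (Fin n) ℝ := V * P with hWdef
  have hvP : v ᵥ* P = P *ᵥ v := by
    nth_rewrite 1 [← hPsymm]
    rw [vecMul_transpose]
  have hq' : q = (P *ᵥ v) ⬝ᵥ (P *ᵥ v) := by
    rw [hqdef, ← mulVec_mulVec, aux_dot_symm hPsymm]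
  have hqpos : 0 < q := by
    rw [hq']
    have hPv : P *ᵥ v ≠ 0 := by
      intro h0
      apply hv
      have := Matrix.mulVec_injective_iff_isUnit.mpr hP.isUnit
      exact this (by rw [h0, mulVec_zero])
    have := dotProduct_star_self_pos_iff (v := P *ᵥ v)
    rw [star_trivial] at this
    exact this.mpr hPv
  have hs0 : 0 ≤ s := by
    have := hP.posSemidef.dotProduct_mulVec_nonneg v
    rwa [star_trivial] at this
  -- From hUt : 1/t ≥ q/D + s
  have hUt' : q / D + s ≤ 1 / t := hUt
  set c : ℝ := 1 - t * s with hcdef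
  have htq : t * q ≤ c * D := by
    have h2 : t * (q / D + s) ≤ t * (1 / t) := mul_le_mul_of_nonneg_left hUt' ht.le
    rw [mul_one_div, div_self ht.ne'] at h2
    have h3 : t * (q / D) ≤ c := by rw [hcdef]; nlinarith [h2]
    calc t * q = (t * (q / D)) * D := by field_simp
    _ ≤ c * D := mul_le_mul_of_nonneg_right h3 hD.le
  have hc : 0 < c := by
    have h2 : t * (q / D) ≤ c := by
      have h2 : t * (q / D + s) ≤ t * (1 / t) := mul_le_mul_of_nonneg_left hUt' ht.le
      rw [mul_one_div, div_self ht.ne'] at h2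
      rw [hcdef]; nlinarith [h2]
    have : 0 < t * (q / D) := mul_pos ht (div_pos hqpos hD)
    linarith
  -- the explicit inverse B
  set B : Matrix (Fin n) (Fin n) ℝ := P + (t / c) • (P * W) with hBdef
  have hW' : W = vecMulVec v (v ᵥ* P) := by rw [hWdef, hVdef, aux_vecMulVec_mul]
  have hWW : W * W = s • W := by
    rw [hW', aux_vecMulVec_mul_vecMulVec, hvP, hsdef, aux_dot_symm hPsymm]
  have key : (M₂ - t • V) * B = 1 := by
    have hstep : (M₂ - t • V) * B
        = M₂ * P + (t / c) • (M₂ * (P * W)) - ((t • (V * P)) + (t * (t / c)) • (V * (P * W))) := by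
      rw [hBdef, Matrix.sub_mul, Matrix.mul_add, Matrix.mul_add, Matrix.mul_smul,
        Matrix.smul_mul, Matrix.smul_mul, Matrix.mul_smul, smul_smul]
    have h1 : M₂ * (P * W) = W := by rw [← mul_assoc, hM₂P, one_mul]
    have h2 : V * (P * W) = s • W := by
      rw [← mul_assoc, ← hWdef, hWW]
    rw [hstep, h1, h2, hM₂P, ← hWdef, smul_smul]
    have hco : t / c - (t + t * (t / c) * s) = 0 := by
      have hcc : t / c * c = t := div_mul_cancel₀ t hc.ne'
      have hexp : t / c - (t + t * (t / c) * s) = (t / c) * (1 - t * s) - t := by ring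
      rw [hexp, ← hcdef, hcc, sub_self]
    have : (t / c) • W - (t • W + (t * (t / c) * s) • W) = ((t / c) - (t + t * (t / c) * s)) • W := by
      rw [sub_smul, add_smul]
    calc 1 + (t / c) • W - (t • W + (t * (t / c) * s) • W)
        = 1 + ((t / c) • W - (t • W + (t * (t / c) * s) • W)) := by abel
      _ = 1 + ((t / c) - (t + t * (t / c) * s)) • W := by rw [this]
      _ = 1 := by rw [hco, zero_smul, add_zero]
  -- B is positive definite
  have hPWpsd : (P * W).PosSemidef := by
    have : P * W = vecMulVec (P *ᵥ v) (P *ᵥ v) := by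
      rw [hWdef, hVdef, ← mul_assoc, aux_mul_vecMulVec, aux_vecMulVec_mul, hvP]
    rw [this]
    exact aux_posSemidef_vecMulVec _
  have hB : B.PosDef := by
    rw [hBdef]
    exact hP.add_posSemidef (aux_posSemidef_smul hPWpsd (div_nonneg ht.le hc.le))
  have hMsub : (u + δU) • (1 : Matrix (Fin n) (Fin n) ℝ) - (A + t • vecMulVec v v)
      = M₂ - t • V := by
    rw [hM₂def, hVdef, sub_add_eq_sub_sub]
  have hposdef : (M₂ - t • V).PosDef := by
    have hBinv : B⁻¹ = M₂ - t • V := Matrix.inv_eq_left_inv key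
    rw [← hBinv]
    exact hB.inv
  constructor
  · -- trace bound
    have hinv : (M₂ - t • V)⁻¹ = B := Matrix.inv_eq_right_inv key
    have htr : upperPotential (u + δU) (A + t • vecMulVec v v) = B.trace := by
      rw [upperPotential, hMsub, hinv]
    have htrB : B.trace = P.trace + (t / c) * q := by
      rw [hBdef, trace_add, trace_smul, smul_eq_mul]
      congr 1
      have : (P * W).trace = q := by
        rw [hWdef, hVdef, ← mul_assoc, trace_mul_comm, ← mul_assoc, trace_mul_comm,
          aux_vecMulVec_mul, aux_trace_vecMulVec, hqdef, dotProduct_mulVec, dotProduct_comm]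
      rw [this]
    rw [htr, htrB, hPot1]
    have hfin : (t / c) * q ≤ D := by
      rw [div_mul_eq_mul_div, div_le_iff₀ hc]
      calc t * q ≤ c * D := htq
        _ = D * c := mul_comm _ _
    have : P.trace = upperPotential (u + δU) A := rfl
    rw [hDdef, hPot1] at hfin
    linarith [hfin]
  · rw [hMsub]
    exact hposdef
end

section
/- Let A be a real symmetric n×n matrix with λ_max(A) < u and δ_U > 0, and let v_1,…,v_m satisfy Σ_i v_i v_i^T = I. Then Σ_i U_A(v_i) ≤ 1/δ_U + Φ^u(A), where U_A(v) = v^T((u+δ_U)I - A)^{-2} v / (Φ^u(A) - Φ^{u+δ_U}(A)) + v^T((u+δ_U)I - A)^{-1} v. -/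
open Matrix

/-- The quantity `U_A(v)` from the Upper Barrier Shift lemma. -/
noncomputable def upperU {n : ℕ} (u δU : ℝ) (A : Matrix (Fin n) (Fin n) ℝ)
    (v : Fin n → ℝ) : ℝ :=
  (v ⬝ᵥ (((u + δU) • (1 : Matrix (Fin n) (Fin n) ℝ) - A)⁻¹ *
      ((u + δU) • (1 : Matrix (Fin n) (Fin n) ℝ) - A)⁻¹).mulVec v) /
    (upperPotential u A - upperPotential (u + δU) A)
  + v ⬝ᵥ (((u + δU) • (1 : Matrix (Fin n) (Fin n) ℝ) - A)⁻¹).mulVec v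

/-- Bound on the total of `U_A(vᵢ)` over a decomposition of the identity:
`∑ᵢ U_A(vᵢ) ≤ 1/δU + Φ^u(A)`. -/
theorem sum_upperU_le {n m : ℕ} (A : Matrix (Fin n) (Fin n) ℝ) (hA : A.IsSymm)
    (u δU : ℝ) (hδ : 0 < δU)
    (hu : (u • (1 : Matrix (Fin n) (Fin n) ℝ) - A).PosDef)
    (v : Fin m → (Fin n → ℝ))
    (hdecomp : ∑ i, vecMulVec (v i) (v i) = (1 : Matrix (Fin n) (Fin n) ℝ)) :
    ∑ i, upperU u δU A (v i) ≤ 1 / δU + upperPotential u A := by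
  classical
  have hA' : A.IsHermitian := by
    rwa [Matrix.IsHermitian, Matrix.conjTranspose_eq_transpose_of_trivial]
  set U : Matrix (Fin n) (Fin n) ℝ := (hA'.eigenvectorUnitary : Matrix (Fin n) (Fin n) ℝ)
    with hUdef
  have hU1 : U * star U = 1 := Matrix.mem_unitaryGroup_iff.mp hA'.eigenvectorUnitary.2
  have hU2 : star U * U = 1 := Matrix.mem_unitaryGroup_iff'.mp hA'.eigenvectorUnitary.2
  set lam : Fin n → ℝ := hA'.eigenvalues with hlamdef
  have hspec : A = U * diagonal lam * star U := by
    have h := hA'.spectral_theorem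
    simpa using h
  -- positivity of `u - lam j`
  have hpos : ∀ j, 0 < u - lam j := by
    intro j
    set x : Fin n → ℝ := ⇑(hA'.eigenvectorBasis j) with hxdef
    have hnorm : ‖hA'.eigenvectorBasis j‖ = 1 := hA'.eigenvectorBasis.orthonormal.1 j
    have hx : x ≠ 0 := by
      intro h
      have h0 : hA'.eigenvectorBasis j = 0 := by
        ext k; exact congrFun h k
      rw [h0, norm_zero] at hnorm; norm_num at hnorm
    have h2 := hu.dotProduct_mulVec_pos hx
    have hdot : x ⬝ᵥ x = 1 := by
      have h3 := EuclideanSpace.inner_eq_star_dotProduct (hA'.eigenvectorBasis j)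
        (hA'.eigenvectorBasis j)
      have hinner : (inner ℝ (hA'.eigenvectorBasis j) (hA'.eigenvectorBasis j) : ℝ) = 1 := by
        rw [real_inner_self_eq_norm_sq, hnorm]; norm_num
      rw [hinner] at h3
      simpa using h3.symm
    have hmul : (u • (1 : Matrix (Fin n) (Fin n) ℝ) - A) *ᵥ x
        = (u - lam j) • x := by
      rw [Matrix.sub_mulVec, hA'.mulVec_eigenvectorBasis, sub_smul]
      congr 1
      rw [Matrix.smul_mulVec, Matrix.one_mulVec]
    rw [hmul] at h2
    simpa [dotProduct_smul, hdot, star_trivial] using h2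
  -- conjugation identity for shifted matrices
  have conj_eq : ∀ c : ℝ,
      c • (1 : Matrix (Fin n) (Fin n) ℝ) - A = U * diagonal (fun j => c - lam j) * star U := by
    intro c
    have h : diagonal (fun j => c - lam j)
        = c • (1 : Matrix (Fin n) (Fin n) ℝ) - diagonal lam := by
      rw [smul_one_eq_diagonal, diagonal_sub]
    rw [h, Matrix.mul_sub, Matrix.sub_mul, ← hspec]
    congr 1
    rw [Matrix.mul_smul, Matrix.smul_mul, Matrix.mul_one, hU1]
  -- inverse of conjugated diagonal
  have inv_conj : ∀ d : Fin n → ℝ, (∀ j, d j ≠ 0) →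
      (U * diagonal d * star U)⁻¹ = U * diagonal (fun j => (d j)⁻¹) * star U := by
    intro d hd
    apply inv_eq_right_inv
    calc U * diagonal d * star U * (U * diagonal (fun j => (d j)⁻¹) * star U)
        = U * (diagonal d * ((star U * U) * (diagonal (fun j => (d j)⁻¹) * star U))) := by
          simp only [Matrix.mul_assoc]
      _ = 1 := by
          rw [hU2, Matrix.one_mul, ← Matrix.mul_assoc (diagonal d), diagonal_mul_diagonal]
          have h : (fun j => d j * (d j)⁻¹) = fun _ => (1:ℝ) :=
            funext fun j => mul_inv_cancel₀ (hd j)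
          rw [h, diagonal_one, Matrix.one_mul, hU1]
  have trace_conj : ∀ X : Matrix (Fin n) (Fin n) ℝ, (U * X * star U).trace = X.trace := by
    intro X
    rw [trace_mul_cycle, hU2, Matrix.one_mul]
  -- sum over decomposition equals trace
  have sum_trace : ∀ X : Matrix (Fin n) (Fin n) ℝ,
      ∑ i, (v i) ⬝ᵥ X *ᵥ (v i) = X.trace := by
    intro X
    have h : ∀ w : Fin n → ℝ, w ⬝ᵥ X *ᵥ w = (X * vecMulVec w w).trace := by
      intro w
      simp only [trace, Matrix.diag, Matrix.mul_apply, vecMulVec_apply, dotProduct, mulVec,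
        Finset.mul_sum]
      apply Finset.sum_congr rfl; intro j _
      apply Finset.sum_congr rfl; intro k _
      ring
    simp_rw [h]
    rw [← trace_sum, ← Matrix.mul_sum, hdecomp, Matrix.mul_one]
  -- notation for the shifted eigenvalues
  set p : Fin n → ℝ := fun j => u - lam j with hpdef
  set q : Fin n → ℝ := fun j => u + δU - lam j with hqdef
  have hq : ∀ j, 0 < q j := fun j => by
    have := hpos j; simp only [hqdef]; linarith
  have hpne : ∀ j, p j ≠ 0 := fun j => ne_of_gt (hpos j)
  have hqne : ∀ j, q j ≠ 0 := fun j => ne_of_gt (hq j)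
  -- inverses
  have hMinv : ((u + δU) • (1 : Matrix (Fin n) (Fin n) ℝ) - A)⁻¹
      = U * diagonal (fun j => (q j)⁻¹) * star U := by
    rw [conj_eq (u + δU)]; exact inv_conj _ hqne
  have hNinv : (u • (1 : Matrix (Fin n) (Fin n) ℝ) - A)⁻¹
      = U * diagonal (fun j => (p j)⁻¹) * star U := by
    rw [conj_eq u]; exact inv_conj _ hpne
  -- traces
  have hΦu : upperPotential u A = ∑ j, (p j)⁻¹ := by
    rw [upperPotential, hNinv, trace_conj, trace_diagonal]
  have hΦq : upperPotential (u + δU) A = ∑ j, (q j)⁻¹ := by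
    rw [upperPotential, hMinv, trace_conj, trace_diagonal]
  have hMsq : (((u + δU) • (1 : Matrix (Fin n) (Fin n) ℝ) - A)⁻¹ *
      ((u + δU) • (1 : Matrix (Fin n) (Fin n) ℝ) - A)⁻¹).trace
      = ∑ j, (q j)⁻¹ * (q j)⁻¹ := by
    rw [hMinv]
    have h : U * diagonal (fun j => (q j)⁻¹) * star U *
        (U * diagonal (fun j => (q j)⁻¹) * star U)
        = U * diagonal (fun j => (q j)⁻¹ * (q j)⁻¹) * star U := by
      calc U * diagonal (fun j => (q j)⁻¹) * star U *
            (U * diagonal (fun j => (q j)⁻¹) * star U)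
          = U * (diagonal (fun j => (q j)⁻¹) *
              ((star U * U) * (diagonal (fun j => (q j)⁻¹) * star U))) := by
            simp only [Matrix.mul_assoc]
        _ = _ := by
            rw [hU2, Matrix.one_mul, ← Matrix.mul_assoc (diagonal _), diagonal_mul_diagonal,
              Matrix.mul_assoc]
    rw [h, trace_conj, trace_diagonal]
  -- rewrite the sum of upperU
  have hsum1 : ∑ i, (v i) ⬝ᵥ (((u + δU) • (1 : Matrix (Fin n) (Fin n) ℝ) - A)⁻¹ *
      ((u + δU) • (1 : Matrix (Fin n) (Fin n) ℝ) - A)⁻¹) *ᵥ (v i)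
      = ∑ j, (q j)⁻¹ * (q j)⁻¹ := by rw [sum_trace, hMsq]
  have hsum2 : ∑ i, (v i) ⬝ᵥ (((u + δU) • (1 : Matrix (Fin n) (Fin n) ℝ) - A)⁻¹) *ᵥ (v i)
      = ∑ j, (q j)⁻¹ := by rw [sum_trace, hMinv, trace_conj, trace_diagonal]
  unfold upperU
  rw [Finset.sum_add_distrib, ← Finset.sum_div, hsum1, hsum2, hΦu, hΦq]
  -- final arithmetic
  set Sq2 : ℝ := ∑ j, (q j)⁻¹ * (q j)⁻¹ with hSq2def
  set S : ℝ := (∑ j, (p j)⁻¹) - ∑ j, (q j)⁻¹ with hSdef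
  have hSq2nonneg : 0 ≤ Sq2 :=
    Finset.sum_nonneg fun j _ => mul_nonneg (inv_nonneg.2 (hq j).le) (inv_nonneg.2 (hq j).le)
  have hS0 : 0 ≤ S := by
    rw [hSdef]
    apply sub_nonneg.2
    apply Finset.sum_le_sum
    intro j _
    apply inv_anti₀ (hpos j)
    simp only [hpdef, hqdef]; linarith
  have hkey : Sq2 * δU ≤ S := by
    rw [hSdef, ← Finset.sum_sub_distrib, hSq2def, Finset.sum_mul]
    apply Finset.sum_le_sum
    intro j _
    have hpj := hpos j
    have hqj := hq j
    have hle : p j ≤ q j := by simp only [hpdef, hqdef]; linarith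
    have hpq : q j - p j = δU := by simp only [hpdef, hqdef]; ring
    have e : (p j)⁻¹ - (q j)⁻¹ = δU / (p j * q j) := by
      rw [← hpq]; field_simp
      rw [div_sub_one (hpne j)]
    have e2 : (q j)⁻¹ * (q j)⁻¹ * δU = δU / (q j * q j) := by
      field_simp
    rw [e, e2]
    apply div_le_div_of_nonneg_left hδ.le (by positivity)
    exact mul_le_mul_of_nonneg_right hle hqj.le
  have hdiv : Sq2 / S ≤ 1 / δU := by
    rcases eq_or_lt_of_le hS0 with h0 | hSpos
    · have hz : Sq2 = 0 := by nlinarith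
      rw [hz, zero_div]
      positivity
    · rw [div_le_div_iff₀ hSpos hδ]
      linarith
  have hsub : (∑ j, (q j)⁻¹) = (∑ j, (p j)⁻¹) - S := by rw [hSdef]; ring
  rw [hsub]
  clear_value Sq2 S
  linarith
end

section
/- Let H = (V,E,w) be a weighted graph on n vertices that (1+ε)-approximates the complete graph K_n, meaning L_{K_n} ⪯ L_H ⪯ (1+ε) L_{K_n}. Then for every pair of disjoint vertex sets S and T, |w(S,T) − (1+ε/2)|S||T|| ≤ (nε/2)·√(|S||T|). -/
/-- The Laplacian quadratic form of a weighted graph on `Fin n`. -/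
noncomputable def lapForm {n : ℕ} (w : Fin n → Fin n → ℝ) (x : Fin n → ℝ) : ℝ :=
  (1 / 2) * ∑ i, ∑ j, w i j * (x i - x j) ^ 2

namespace ExpMix

noncomputable def Phi {n : ℕ} (w : Fin n → Fin n → ℝ) (x y : Fin n → ℝ) : ℝ :=
  (1 / 2) * ∑ i, ∑ j, w i j * ((x i - x j) * (y i - y j))

lemma polar {n : ℕ} (w : Fin n → Fin n → ℝ) (x y : Fin n → ℝ) :
    lapForm w (x + y) - lapForm w (x - y) = 4 * Phi w x y := by
  simp only [lapForm, Phi, Pi.add_apply, Pi.sub_apply]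
  simp_rw [Finset.mul_sum, ← Finset.sum_sub_distrib]
  refine Finset.sum_congr rfl fun i _ => Finset.sum_congr rfl fun j _ => ?_
  ring

lemma para {n : ℕ} (w : Fin n → Fin n → ℝ) (x y : Fin n → ℝ) :
    lapForm w (x + y) + lapForm w (x - y) = 2 * lapForm w x + 2 * lapForm w y := by
  simp only [lapForm, Pi.add_apply, Pi.sub_apply]
  simp_rw [Finset.mul_sum, ← Finset.sum_add_distrib]
  refine Finset.sum_congr rfl fun i _ => Finset.sum_congr rfl fun j _ => ?_
  ring

lemma phi_smul {n : ℕ} (w : Fin n → Fin n → ℝ) (a b : ℝ) (x y : Fin n → ℝ) :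
    Phi w (a • x) (b • y) = a * b * Phi w x y := by
  simp only [Phi, Pi.smul_apply, smul_eq_mul]
  simp_rw [Finset.mul_sum]
  refine Finset.sum_congr rfl fun i _ => Finset.sum_congr rfl fun j _ => ?_
  ring

lemma lap_smul {n : ℕ} (w : Fin n → Fin n → ℝ) (a : ℝ) (x : Fin n → ℝ) :
    lapForm w (a • x) = a ^ 2 * lapForm w x := by
  simp only [lapForm, Pi.smul_apply, smul_eq_mul]
  simp_rw [Finset.mul_sum]
  refine Finset.sum_congr rfl fun i _ => Finset.sum_congr rfl fun j _ => ?_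
  ring

noncomputable def chi {n : ℕ} (S : Finset (Fin n)) : Fin n → ℝ := fun i => if i ∈ S then 1 else 0

lemma sum_chi_mul {n : ℕ} (A : Finset (Fin n)) (g : Fin n → ℝ) :
    ∑ i, chi A i * g i = ∑ i ∈ A, g i := by
  simp [chi, ite_mul, Finset.sum_ite_mem]

lemma sum_prod_chi {n : ℕ} (w : Fin n → Fin n → ℝ) (S T : Finset (Fin n)) :
    ∑ i, ∑ j, w i j * (chi S i * chi T j) = ∑ i ∈ S, ∑ j ∈ T, w i j := by
  calc ∑ i, ∑ j, w i j * (chi S i * chi T j)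
      = ∑ i, chi S i * ∑ j, chi T j * w i j := by
        refine Finset.sum_congr rfl fun i _ => ?_
        rw [Finset.mul_sum]
        refine Finset.sum_congr rfl fun j _ => by ring
    _ = ∑ i ∈ S, ∑ j, chi T j * w i j := sum_chi_mul S _
    _ = ∑ i ∈ S, ∑ j ∈ T, w i j := Finset.sum_congr rfl fun i _ => sum_chi_mul T _

lemma phi_chi {n : ℕ} (w : Fin n → Fin n → ℝ) (hsymm : ∀ i j, w i j = w j i)
    (S T : Finset (Fin n)) (hST : Disjoint S T) :
    Phi w (chi S) (chi T) = -∑ i ∈ S, ∑ j ∈ T, w i j := by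
  have h0 : ∀ i, chi S i * chi T i = 0 := by
    intro i
    simp only [chi]
    by_cases h : i ∈ S
    · simp [h, Finset.disjoint_left.1 hST h]
    · simp [h]
  have hstep : Phi w (chi S) (chi T)
      = (1/2) * ∑ i, ∑ j, (-(w i j * (chi S i * chi T j)) + -(w i j * (chi T i * chi S j))) := by
    unfold Phi
    congr 1
    refine Finset.sum_congr rfl fun i _ => Finset.sum_congr rfl fun j _ => ?_
    linear_combination w i j * h0 i + w i j * h0 j
  rw [hstep]
  have h1 : ∑ i, ∑ j, (-(w i j * (chi S i * chi T j)) + -(w i j * (chi T i * chi S j)))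
      = (∑ i, ∑ j, -(w i j * (chi S i * chi T j))) + ∑ i, ∑ j, -(w i j * (chi T i * chi S j)) := by
    simp [Finset.sum_add_distrib]
  rw [h1]
  have h2 : (∑ i, ∑ j, -(w i j * (chi T i * chi S j)))
      = ∑ i, ∑ j, -(w i j * (chi S i * chi T j)) := by
    rw [Finset.sum_comm]
    refine Finset.sum_congr rfl fun i _ => Finset.sum_congr rfl fun j _ => ?_
    rw [hsymm i j]; ring
  rw [h2]
  have h3 : (∑ i, ∑ j, -(w i j * (chi S i * chi T j))) = -∑ i ∈ S, ∑ j ∈ T, w i j := by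
    rw [← sum_prod_chi w S T]
    simp
  rw [h3]; ring

lemma lapK {n : ℕ} (x : Fin n → ℝ) :
    lapForm (fun i j => if i = j then (0:ℝ) else 1) x
      = n * ∑ i, (x i) ^ 2 - (∑ i, x i) ^ 2 := by
  have h : ∑ i, ∑ j, (if i = j then (0:ℝ) else 1) * (x i - x j) ^ 2
      = ∑ i, ∑ j, ((x i) ^ 2 + (x j) ^ 2 - 2 * (x i * x j)) := by
    refine Finset.sum_congr rfl fun i _ => Finset.sum_congr rfl fun j _ => ?_
    rcases eq_or_ne i j with h | h
    · simp [h]; ring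
    · simp only [if_neg h]; ring
  have e1 : ∑ i, ∑ j, ((x i) ^ 2 + (x j) ^ 2 - 2 * (x i * x j))
      = ((∑ i, ∑ _j : Fin n, (x i) ^ 2) + ∑ _i : Fin n, ∑ j, (x j) ^ 2)
        - ∑ i, ∑ j, 2 * (x i * x j) := by
    simp [Finset.sum_add_distrib, Finset.sum_sub_distrib]
  have e2 : ∑ i, ∑ _j : Fin n, (x i) ^ 2 = n * ∑ i, (x i) ^ 2 := by
    simp [Finset.sum_const, Finset.card_univ, Finset.mul_sum]
  have e3 : ∑ _i : Fin n, ∑ j, (x j) ^ 2 = n * ∑ j, (x j) ^ 2 := by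
    simp [Finset.sum_const, Finset.card_univ]
  have e4 : ∑ i, ∑ j, 2 * (x i * x j) = 2 * (∑ i, x i) * (∑ j, x j) := by
    simp_rw [← mul_assoc, ← Finset.mul_sum, ← Finset.sum_mul, ← Finset.mul_sum]
  rw [lapForm, h, e1, e2, e3, e4]
  ring

lemma lapK_chi {n : ℕ} (S : Finset (Fin n)) :
    lapForm (fun i j => if i = j then (0:ℝ) else 1) (chi S)
      = n * S.card - (S.card : ℝ) ^ 2 := by
  rw [lapK]
  have h1 : ∑ i, (chi S i) ^ 2 = (S.card : ℝ) := by
    simp [chi, apply_ite (· ^ (2:ℕ)), Finset.sum_ite_mem]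
  have h2 : ∑ i, chi S i = (S.card : ℝ) := by
    simp [chi, Finset.sum_ite_mem]
  rw [h1, h2]

end ExpMix

open ExpMix in
/-- Expander Mixing (Lemma 4.1): if `H` `(1+ε)`-approximates the complete graph `Kₙ`,
then for all disjoint vertex sets `S, T`,
`|w(S,T) - (1+ε/2)|S||T|| ≤ (nε/2)·√(|S||T|)`. -/
theorem expander_mixing {n : ℕ} (ε : ℝ)
    (w : Fin n → Fin n → ℝ)
    (hsymm : ∀ i j, w i j = w j i)
    (hnonneg : ∀ i j, 0 ≤ w i j)
    (hdiag : ∀ i, w i i = 0)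
    (happrox : ∀ x : Fin n → ℝ,
      lapForm (fun i j => if i = j then (0 : ℝ) else 1) x ≤ lapForm w x ∧
      lapForm w x ≤ (1 + ε) * lapForm (fun i j => if i = j then (0 : ℝ) else 1) x)
    (S T : Finset (Fin n)) (hST : Disjoint S T) :
    |(∑ i ∈ S, ∑ j ∈ T, w i j) - (1 + ε / 2) * S.card * T.card| ≤
      (n : ℝ) * (ε / 2) * Real.sqrt (S.card * T.card) := by
  classical
  set K : Fin n → Fin n → ℝ := fun i j => if i = j then 0 else 1 with hKdef
  rcases S.eq_empty_or_nonempty with rfl | hS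
  · simp
  rcases T.eq_empty_or_nonempty with rfl | hT
  · simp
  -- cardinality facts
  have hcard : S.card + T.card ≤ n := by
    have h := Finset.card_le_univ (S ∪ T)
    rw [Finset.card_union_of_disjoint hST] at h
    simpa using h
  have hS1 : (1 : ℝ) ≤ S.card := by exact_mod_cast hS.card_pos
  have hT1 : (1 : ℝ) ≤ T.card := by exact_mod_cast hT.card_pos
  have hcardR : (S.card : ℝ) + T.card ≤ n := by exact_mod_cast hcard
  set qS := lapForm K (chi S) with hqSdef
  set qT := lapForm K (chi T) with hqTdef
  clear_value qS qT
  have hqS : qS = n * S.card - (S.card : ℝ) ^ 2 := by rw [hqSdef]; exact lapK_chi S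
  have hqT : qT = n * T.card - (T.card : ℝ) ^ 2 := by rw [hqTdef]; exact lapK_chi T
  have hqSpos : 0 < qS := by rw [hqS]; nlinarith
  have hqTpos : 0 < qT := by rw [hqT]; nlinarith
  have hε : 0 ≤ ε := by
    have h1 := (happrox (chi S)).1
    have h2 := (happrox (chi S)).2
    nlinarith
  have hE : ∀ z, |lapForm w z - (1 + ε / 2) * lapForm K z| ≤ (ε / 2) * lapForm K z := by
    intro z
    have h1 := (happrox z).1
    have h2 := (happrox z).2
    rw [abs_le]
    constructor <;> nlinarith
  have key : ∀ x y : Fin n → ℝ,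
      |Phi w x y - (1 + ε / 2) * Phi K x y| ≤ (ε / 4) * (lapForm K x + lapForm K y) := by
    intro x y
    have hw := polar w x y
    have hk := polar K x y
    have hp := para K x y
    have h1 := hE (x + y)
    have h2 := hE (x - y)
    have heq : 4 * (Phi w x y - (1 + ε / 2) * Phi K x y)
        = (lapForm w (x + y) - (1 + ε / 2) * lapForm K (x + y))
          - (lapForm w (x - y) - (1 + ε / 2) * lapForm K (x - y)) := by
      linear_combination -hw + (1 + ε / 2) * hk
    have h4 : |4 * (Phi w x y - (1 + ε / 2) * Phi K x y)|
        ≤ ε * (lapForm K x + lapForm K y) := by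
      rw [heq]
      calc |(lapForm w (x + y) - (1 + ε / 2) * lapForm K (x + y))
            - (lapForm w (x - y) - (1 + ε / 2) * lapForm K (x - y))|
          ≤ |lapForm w (x + y) - (1 + ε / 2) * lapForm K (x + y)|
            + |lapForm w (x - y) - (1 + ε / 2) * lapForm K (x - y)| := abs_sub _ _
        _ ≤ (ε / 2) * lapForm K (x + y) + (ε / 2) * lapForm K (x - y) := add_le_add h1 h2
        _ = ε * (lapForm K x + lapForm K y) := by linear_combination (ε / 2) * hp
    rw [abs_mul] at h4
    have : |(4 : ℝ)| = 4 := by norm_num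
    rw [this] at h4
    linarith
  -- scale indicators to have unit complete-graph energy
  set a := (Real.sqrt qS)⁻¹ with hadef
  set b := (Real.sqrt qT)⁻¹ with hbdef
  have hsS : 0 < Real.sqrt qS := Real.sqrt_pos.2 hqSpos
  have hsT : 0 < Real.sqrt qT := Real.sqrt_pos.2 hqTpos
  have ha : 0 < a := inv_pos.2 hsS
  have hb : 0 < b := inv_pos.2 hsT
  have hx1 : lapForm K (a • chi S) = 1 := by
    rw [lap_smul, hadef, ← hqSdef]
    rw [inv_pow, Real.sq_sqrt hqSpos.le]
    field_simp
  have hy1 : lapForm K (b • chi T) = 1 := by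
    rw [lap_smul, hbdef, ← hqTdef]
    rw [inv_pow, Real.sq_sqrt hqTpos.le]
    field_simp
  have hkey := key (a • chi S) (b • chi T)
  rw [phi_smul, phi_smul, hx1, hy1] at hkey
  have hfact : a * b * Phi w (chi S) (chi T) - (1 + ε / 2) * (a * b * Phi K (chi S) (chi T))
      = a * b * (Phi w (chi S) (chi T) - (1 + ε / 2) * Phi K (chi S) (chi T)) := by ring
  rw [hfact, abs_mul, abs_of_pos (mul_pos ha hb)] at hkey
  -- so |D| ≤ (ε/2) √qS √qT
  have hD : |Phi w (chi S) (chi T) - (1 + ε / 2) * Phi K (chi S) (chi T)|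
      ≤ (ε / 2) * (Real.sqrt qS * Real.sqrt qT) := by
    have hmul := mul_le_mul_of_nonneg_left hkey (le_of_lt (mul_pos hsS hsT))
    have hid : Real.sqrt qS * Real.sqrt qT * (a * b) = 1 := by
      rw [hadef, hbdef]; field_simp
    calc |Phi w (chi S) (chi T) - (1 + ε / 2) * Phi K (chi S) (chi T)|
        = Real.sqrt qS * Real.sqrt qT
            * (a * b * |Phi w (chi S) (chi T) - (1 + ε / 2) * Phi K (chi S) (chi T)|) := by
          rw [← mul_assoc, hid, one_mul]
      _ ≤ Real.sqrt qS * Real.sqrt qT * ((ε / 4) * (1 + 1)) := hmul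
      _ = (ε / 2) * (Real.sqrt qS * Real.sqrt qT) := by ring
  -- evaluate the bilinear forms at indicators
  have hPw : Phi w (chi S) (chi T) = -∑ i ∈ S, ∑ j ∈ T, w i j := phi_chi w hsymm S T hST
  have hKsymm : ∀ i j, K i j = K j i := by
    intro i j; simp only [hKdef]
    by_cases h : i = j <;> simp [h, Ne.symm, eq_comm]
  have hPK : Phi K (chi S) (chi T) = -((S.card : ℝ) * T.card) := by
    rw [phi_chi K hKsymm S T hST]
    congr 1
    have hone : ∀ i ∈ S, ∀ j ∈ T, K i j = 1 := by
      intro i hi j hj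
      have hne : i ≠ j := fun h => Finset.disjoint_left.1 hST hi (h ▸ hj)
      simp [hKdef, hne]
    have hsum : ∑ i ∈ S, ∑ j ∈ T, K i j = ∑ _i ∈ S, ∑ _j ∈ T, (1 : ℝ) :=
      Finset.sum_congr rfl fun i hi => Finset.sum_congr rfl fun j hj => hone i hi j hj
    rw [hsum]
    simp [mul_comm]
  rw [hPw, hPK] at hD
  have habs : |-∑ i ∈ S, ∑ j ∈ T, w i j - (1 + ε / 2) * -((S.card : ℝ) * T.card)|
      = |(∑ i ∈ S, ∑ j ∈ T, w i j) - (1 + ε / 2) * S.card * T.card| := by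
    rw [← abs_neg]; congr 1; ring
  rw [habs] at hD
  -- bound the square roots
  have hsqS : Real.sqrt qS ≤ Real.sqrt ((n : ℝ) * S.card) := by
    apply Real.sqrt_le_sqrt
    rw [hqS]; exact sub_le_self _ (sq_nonneg _)
  have hsqT : Real.sqrt qT ≤ Real.sqrt ((n : ℝ) * T.card) := by
    apply Real.sqrt_le_sqrt
    rw [hqT]; exact sub_le_self _ (sq_nonneg _)
  have hnn : (0:ℝ) ≤ n := Nat.cast_nonneg n
  have hprod : Real.sqrt ((n : ℝ) * S.card) * Real.sqrt ((n : ℝ) * T.card)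
      = n * Real.sqrt ((S.card : ℝ) * T.card) := by
    rw [← Real.sqrt_mul (by positivity)]
    have : (n : ℝ) * S.card * ((n : ℝ) * T.card) = (n : ℝ) ^ 2 * ((S.card : ℝ) * T.card) := by ring
    rw [this, Real.sqrt_mul (by positivity), Real.sqrt_sq hnn]
  calc |(∑ i ∈ S, ∑ j ∈ T, w i j) - (1 + ε / 2) * S.card * T.card|
      ≤ (ε / 2) * (Real.sqrt qS * Real.sqrt qT) := hD
    _ ≤ (ε / 2) * (Real.sqrt ((n : ℝ) * S.card) * Real.sqrt ((n : ℝ) * T.card)) := by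
        apply mul_le_mul_of_nonneg_left _ (by linarith)
        exact mul_le_mul hsqS hsqT (Real.sqrt_nonneg _) (Real.sqrt_nonneg _)
    _ = (n : ℝ) * (ε / 2) * Real.sqrt ((S.card : ℝ) * T.card) := by rw [hprod]; ring
end

section
/- Let G be the complete graph on n vertices and H = (V,E,w) a weighted graph containing a vertex of degree d, such that x^T L_G x ≤ x^T L_H x ≤ κ · x^T L_G x for all x. Then κ ≥ 1 + 2/√d − O(√d/n). -/
lemma lapK_eq {n : ℕ} (y : Fin n → ℝ) :
    lapForm (fun i j => if i = j then (0 : ℝ) else 1) y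
      = n * (∑ i, y i ^ 2) - (∑ i, y i) ^ 2 := by
  unfold lapForm
  have h1 : ∀ i j : Fin n, (if i = j then (0:ℝ) else 1) * (y i - y j) ^ 2
      = y i ^ 2 + y j ^ 2 - 2 * (y i * y j) := by
    intro i j
    split_ifs with h
    · subst h; ring
    · ring
  simp only [h1]
  have h2 : ∀ i : Fin n, ∑ j, (y i ^ 2 + y j ^ 2 - 2 * (y i * y j))
      = n * y i ^ 2 + (∑ j, y j ^ 2) - 2 * y i * (∑ j, y j) := by
    intro i
    have e1 : ∑ j, (y i ^ 2 + y j ^ 2 - 2 * (y i * y j))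
        = ∑ j, (y i ^ 2 + y j ^ 2 - (2 * y i) * y j) :=
      Finset.sum_congr rfl fun j _ => by ring
    rw [e1, Finset.sum_sub_distrib, Finset.sum_add_distrib, Finset.sum_const,
      ← Finset.mul_sum, Finset.card_univ, Fintype.card_fin, nsmul_eq_mul]
  rw [Finset.sum_congr rfl fun i _ => h2 i]
  rw [Finset.sum_sub_distrib, Finset.sum_add_distrib, Finset.sum_const,
    Finset.card_univ, Fintype.card_fin, nsmul_eq_mul]
  have e2 : ∑ x : Fin n, 2 * y x * (∑ j : Fin n, y j)
      = 2 * ((∑ x : Fin n, y x) * (∑ j : Fin n, y j)) := by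
    rw [← Finset.sum_mul, ← Finset.mul_sum]
    ring
  have e3 : ∑ x : Fin n, (n:ℝ) * y x ^ 2 = (n:ℝ) * ∑ x : Fin n, y x ^ 2 :=
    (Finset.mul_sum _ _ _).symm
  rw [e2, e3]
  ring

lemma sum_three {n : ℕ} (v₀ : Fin n) (w : Fin n → Fin n → ℝ) (hdiag : w v₀ v₀ = 0)
    (t u : ℝ) [DecidableEq ℝ] :
    ∑ j, (if j = v₀ then t else if w v₀ j = 0 then 0 else u)
      = t + ((Finset.univ.filter fun j => w v₀ j ≠ 0).card : ℝ) * u := by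
  classical
  rw [← Finset.add_sum_erase _ _ (Finset.mem_univ v₀)]
  simp only [if_pos rfl]
  congr 1
  have h1 : ∀ j ∈ Finset.univ.erase v₀,
      (if j = v₀ then t else if w v₀ j = 0 then 0 else u)
        = if w v₀ j ≠ 0 then u else 0 := by
    intro j hj
    have hj' : j ≠ v₀ := (Finset.mem_erase.mp hj).1
    simp only [if_neg hj', ne_eq, ite_not]
  rw [Finset.sum_congr rfl h1]
  rw [← Finset.sum_filter]
  have h2 : ((Finset.univ.erase v₀).filter fun j => w v₀ j ≠ 0)
      = Finset.univ.filter fun j => w v₀ j ≠ 0 := by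
    apply Finset.Subset.antisymm
    · exact Finset.filter_subset_filter _ (Finset.subset_univ _)
    · intro j hj
      have hne := (Finset.mem_filter.mp hj).2
      refine Finset.mem_filter.mpr ⟨?_, hne⟩
      exact Finset.mem_erase.mpr ⟨fun h => hne (h ▸ hdiag), Finset.mem_univ j⟩
  rw [h2, Finset.sum_const, nsmul_eq_mul]

set_option maxHeartbeats 1000000 in
lemma key_numeric (dR nR σ s b c D N : ℝ)
    (hd1 : 1 ≤ dR) (hnd : 2 * dR + 2 ≤ nR)
    (hσ2 : σ ^ 2 = dR) (hσpos : 0 < σ)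
    (hs2 : s ^ 2 = dR + 1) (hspos : 0 < s)
    (hb : b = -(1 + s) / dR) (hc : c = 2 * b - 1)
    (hD : D = nR * (1 + dR * b ^ 2) - (1 + dR * b) ^ 2)
    (hN : N = nR * (c ^ 2 + dR * b ^ 2) - (c + dR * b) ^ 2) :
    0 < D ∧ (1 + 2 / σ - 100 * σ / nR) * D ≤ N := by
  have hdpos : (0:ℝ) < dR := by linarith
  have hnpos : (0:ℝ) < nR := by linarith
  have hs1 : 1 ≤ s := by nlinarith
  have hsσ : σ ≤ s := by nlinarith
  have hs32 : s ≤ 3 / 2 * σ := by nlinarith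
  have hbneg : b ≤ 0 := by
    rw [hb]; apply div_nonpos_of_nonpos_of_nonneg <;> linarith
  have hdR : dR = s ^ 2 - 1 := by linarith
  have hs0 : s ^ 2 - 1 ≠ 0 := ne_of_gt (by nlinarith : (0:ℝ) < s ^ 2 - 1)
  have hdb2 : dR * b ^ 2 = 1 - 2 * b := by
    rw [hb, hdR]; field_simp; ring
  have hCS : (1 + dR * b) ^ 2 ≤ (dR + 1) * (2 - 2 * b) := by
    nlinarith [mul_nonneg hdpos.le (sq_nonneg (b - 1)), hdb2]
  have hDn : nR ≤ D := by
    have e1 : D = nR * (2 - 2 * b) - (1 + dR * b) ^ 2 := by rw [hD, hdb2]; ring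
    nlinarith [hCS]
  have hDpos : 0 < D := lt_of_lt_of_le hnpos hDn
  refine ⟨hDpos, ?_⟩
  have hkey : N = (1 - 2 * b) * D - 2 * s ^ 2 * (1 + s) ^ 3 / dR ^ 2 := by
    rw [hN, hD, hc, hb, hdR]
    field_simp
    ring
  have hE : 2 * s ^ 2 * (1 + s) ^ 3 / dR ^ 2 ≤ 100 * σ := by
    rw [div_le_iff₀ (by positivity)]
    have e1 : (1 + s) ^ 3 ≤ 8 * s ^ 3 := by
      have h8 : (1 + s) ^ 3 ≤ (2 * s) ^ 3 := by
        apply pow_le_pow_left₀ (by linarith) (by linarith)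
      calc (1 + s) ^ 3 ≤ (2 * s) ^ 3 := h8
        _ = 8 * s ^ 3 := by ring
    have e3 : s ^ 2 ≤ 2 * dR := by linarith [hs2]
    have e2 : s ^ 3 ≤ 3 * σ * dR := by
      calc s ^ 3 = s * s ^ 2 := by ring
        _ ≤ (3 / 2 * σ) * (2 * dR) :=
            mul_le_mul hs32 e3 (by positivity) (by positivity)
        _ = 3 * σ * dR := by ring
    have q1 : 2 * s ^ 2 * (1 + s) ^ 3 ≤ 2 * s ^ 2 * (8 * s ^ 3) :=
      mul_le_mul_of_nonneg_left e1 (by positivity)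
    have q2 : s ^ 2 * s ^ 3 ≤ (2 * dR) * (3 * σ * dR) :=
      mul_le_mul e3 e2 (by positivity) (by linarith)
    have q3 : 0 ≤ σ * dR ^ 2 := by positivity
    linarith [q1, q2, q3]
  have hbσ : 2 / σ ≤ -2 * b := by
    rw [hb, div_le_iff₀ hσpos]
    rw [show -2 * (-(1 + s) / dR) * σ = 2 * (1 + s) * σ / dR by ring]
    rw [le_div_iff₀ hdpos]
    nlinarith [mul_nonneg hσpos.le (by linarith : (0:ℝ) ≤ 1 + s - σ), hσ2]
  have p1 : 0 ≤ (-2 * b - 2 / σ) * D := mul_nonneg (by linarith) hDpos.le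
  have p2 : 100 * σ ≤ 100 * σ / nR * D := by
    have h := mul_le_mul_of_nonneg_left hDn (show (0:ℝ) ≤ 100 * σ / nR by positivity)
    rw [div_mul_cancel₀] at h
    · exact h
    · exact ne_of_gt hnpos
  have expand : (1 - 2 * b) * D - (1 + 2 / σ - 100 * σ / nR) * D
      = (-2 * b - 2 / σ) * D + 100 * σ / nR * D := by ring
  rw [hkey]
  linarith

/-- Proposition 4.2: there is a universal constant `C` such that if a weighted graph
`H` on `n` vertices with a vertex of (unweighted) degree `d` `κ`-approximates the
complete graph, then `κ ≥ 1 + 2/√d - C·√d/n`. -/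
theorem lower_bound_complete_approx :
    ∃ C : ℝ, 0 < C ∧
      ∀ (n d : ℕ), 0 < d → 0 < n →
      ∀ (w : Fin n → Fin n → ℝ) (κ : ℝ),
        (∀ i j, w i j = w j i) →
        (∀ i j, 0 ≤ w i j) →
        (∀ i, w i i = 0) →
        (∃ v₀ : Fin n, (Finset.univ.filter fun j => w v₀ j ≠ 0).card = d) →
        (∀ x : Fin n → ℝ,
          lapForm (fun i j => if i = j then (0 : ℝ) else 1) x ≤ lapForm w x ∧
          lapForm w x ≤ κ * lapForm (fun i j => if i = j then (0 : ℝ) else 1) x) →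
        1 + 2 / Real.sqrt d - C * Real.sqrt d / n ≤ κ := by
  classical
  refine ⟨100, by norm_num, ?_⟩
  intro n d hd hn w κ hsymm hnonneg hdiag ⟨v₀, hdeg⟩ hx
  -- basic quantities
  set σ : ℝ := Real.sqrt d with hσdef
  have hd1 : (1:ℝ) ≤ (d:ℝ) := by exact_mod_cast hd
  have hdpos : (0:ℝ) < (d:ℝ) := by linarith
  have hnpos : (0:ℝ) < (n:ℝ) := by exact_mod_cast hn
  have hσ2 : σ ^ 2 = d := Real.sq_sqrt (by positivity)
  have hσpos : 0 < σ := Real.sqrt_pos.mpr hdpos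
  -- d ≤ n - 1
  have hsub : (Finset.univ.filter fun j => w v₀ j ≠ 0) ⊆ Finset.univ.erase v₀ := by
    intro j hj
    have hne := (Finset.mem_filter.mp hj).2
    exact Finset.mem_erase.mpr ⟨fun h => hne (h ▸ hdiag v₀), Finset.mem_univ j⟩
  have hdn : d + 1 ≤ n := by
    have := Finset.card_le_card hsub
    rw [hdeg, Finset.card_erase_of_mem (Finset.mem_univ v₀), Finset.card_univ,
      Fintype.card_fin] at this
    omega
  have hn2 : 2 ≤ n := by omega
  -- κ ≥ 1
  have hκ1 : 1 ≤ κ := by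
    set y : Fin n → ℝ := fun j => if j = v₀ then 1 else 0 with hy
    have hsy : ∑ i, y i = 1 := by simp [hy]
    have hsy2 : ∑ i, y i ^ 2 = 1 := by
      have : ∀ i, y i ^ 2 = if i = v₀ then 1 else 0 := by
        intro i; simp only [hy]; split_ifs <;> norm_num
      rw [Finset.sum_congr rfl fun i _ => this i]; simp
    have hQ : lapForm (fun i j => if i = j then (0:ℝ) else 1) y = n - 1 := by
      rw [lapK_eq, hsy, hsy2]; ring
    have h1 := (hx y).1
    have h2 := (hx y).2
    rw [hQ] at h1 h2
    have hn1 : (0:ℝ) < (n:ℝ) - 1 := by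
      have : (2:ℝ) ≤ n := by exact_mod_cast hn2
      linarith
    nlinarith
  by_cases hcase : n ≤ 2 * d + 1
  · -- small n: RHS ≤ 1 ≤ κ
    have hnd : (n:ℝ) ≤ 2 * d + 1 := by exact_mod_cast hcase
    have : 2 / σ ≤ 100 * σ / n := by
      rw [div_le_div_iff₀ hσpos hnpos]
      nlinarith
    linarith
  · -- main case : n ≥ 2d + 2
    push_neg at hcase
    have hnd : (2:ℝ) * d + 2 ≤ (n:ℝ) := by
      have : 2 * d + 2 ≤ n := by omega
      exact_mod_cast this
    set s : ℝ := Real.sqrt (d + 1) with hsdef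
    have hs2 : s ^ 2 = d + 1 := by
      rw [hsdef]
      rw [Real.sq_sqrt (by positivity)]
    set b : ℝ := -(1 + s) / d with hb
    set c : ℝ := 2 * b - 1 with hc
    -- test vectors
    set x : Fin n → ℝ := fun j => if j = v₀ then 1 else if w v₀ j = 0 then 0 else b with hxdef
    set x' : Fin n → ℝ := fun j => if j = v₀ then c else if w v₀ j = 0 then 0 else b with hx'def
    have hsx : ∑ i, x i = 1 + d * b := by
      rw [hxdef, sum_three v₀ w (hdiag v₀) 1 b, hdeg]
    have hsx' : ∑ i, x' i = c + d * b := by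
      rw [hx'def, sum_three v₀ w (hdiag v₀) c b, hdeg]
    have hsq : ∀ (t : ℝ) (j : Fin n),
        (if j = v₀ then t else if w v₀ j = 0 then 0 else b) ^ 2
          = if j = v₀ then t ^ 2 else if w v₀ j = 0 then 0 else b ^ 2 := by
      intro t j; split_ifs <;> ring
    have hsx2 : ∑ i, x i ^ 2 = 1 + d * b ^ 2 := by
      rw [hxdef]
      rw [Finset.sum_congr rfl fun i _ => hsq 1 i, sum_three v₀ w (hdiag v₀) (1^2) (b^2), hdeg]
      norm_num
    have hsx'2 : ∑ i, x' i ^ 2 = c ^ 2 + d * b ^ 2 := by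
      rw [hx'def]
      rw [Finset.sum_congr rfl fun i _ => hsq c i, sum_three v₀ w (hdiag v₀) (c^2) (b^2), hdeg]
    set D : ℝ := n * (1 + d * b ^ 2) - (1 + d * b) ^ 2 with hD
    set N : ℝ := n * (c ^ 2 + d * b ^ 2) - (c + d * b) ^ 2 with hN
    have hQx : lapForm (fun i j => if i = j then (0:ℝ) else 1) x = D := by
      rw [lapK_eq, hsx, hsx2]
    have hQx' : lapForm (fun i j => if i = j then (0:ℝ) else 1) x' = N := by
      rw [lapK_eq, hsx', hsx'2]
    -- reflection identity
    have hrefl : lapForm w x = lapForm w x' := by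
      unfold lapForm
      congr 1
      apply Finset.sum_congr rfl
      intro i _
      apply Finset.sum_congr rfl
      intro j _
      by_cases h0 : w i j = 0
      · rw [h0]; ring
      · by_cases hi : i = v₀
        · by_cases hj : j = v₀
          · exfalso; exact h0 (hi ▸ hj ▸ hdiag v₀)
          · have hwj : w v₀ j ≠ 0 := by rw [← hi]; exact h0
            subst hi
            simp only [hxdef, hx'def, if_pos rfl, if_neg hj, if_neg hwj, hc]
            ring
        · by_cases hj : j = v₀
          · have hwi : w v₀ i ≠ 0 := by
              rw [hsymm v₀ i, ← hj]; exact h0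
            subst hj
            simp only [hxdef, hx'def, if_pos rfl, if_neg hi, if_neg hwi, hc]
            ring
          · simp only [hxdef, hx'def, if_neg hi, if_neg hj]
    -- main chain : κ * D ≥ N
    have hchain : N ≤ κ * D := by
      have h1 := (hx x').1
      have h2 := (hx x).2
      rw [hQx'] at h1
      rw [hQx] at h2
      rw [hrefl] at h2
      linarith
    obtain ⟨hDpos, hfinal⟩ := key_numeric (d:ℝ) (n:ℝ) σ s b c D N hd1 hnd hσ2 hσpos hs2
      (Real.sqrt_pos.mpr (by linarith)) hb hc hD hN
    -- conclude
    have := hfinal.trans hchain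
    calc 1 + 2 / σ - 100 * σ / n ≤ κ := le_of_mul_le_mul_right this hDpos
end
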